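/- Let F be an abelian field of conductor f_F and K ⊆ F, K ≠ ℚ, a subfield in which some prime p ramified in F/ℚ splits completely. Then N_{F/K}(θ_F) = 0. -/

import Mathlib

open Finset

lemma sum_range_rat (t : ℕ) : ∑ j ∈ range t, (j:ℚ) = t*(t-1)/2 := by
  induction t with
  | zero => simp
  | succ n ih => rw [Finset.sum_range_succ, ih]; push_cast; ring

lemma distrib_sum (m t : ℕ) (hm : 0 < m) (ht : 0 < t) (b : ℕ) :
    ∑ j ∈ range t, ((1:ℚ)/2 - (b + j*m : ℚ)/(m*t)) = 1/2 - (b:ℚ)/m := by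
  have hm' : (m:ℚ) ≠ 0 := Nat.cast_ne_zero.mpr hm.ne'
  have ht' : (t:ℚ) ≠ 0 := Nat.cast_ne_zero.mpr ht.ne'
  have expand : ∀ j : ℕ, ((1:ℚ)/2 - (b + j*m : ℚ)/(m*t))
      = (1/2 - (b:ℚ)/(m*t)) - (j:ℚ) * (1/t) := by
    intro j; field_simp; ring
  simp only [expand]
  rw [Finset.sum_sub_distrib, Finset.sum_const, ← Finset.sum_mul, sum_range_rat]
  simp only [card_range, nsmul_eq_mul]
  field_simp
  ring

lemma sum_filter_mod (m t b : ℕ) (hm : 0 < m) (hb : b < m) (F : ℕ → ℚ) :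
    ∑ x ∈ (range (m*t)).filter (fun x => x % m = b), F x
      = ∑ j ∈ range t, F (b + j*m) := by
  refine Finset.sum_nbij' (i := fun x => x / m) (j := fun j => b + j*m) ?_ ?_ ?_ ?_ ?_
  · intro x hx
    simp only [mem_filter, mem_range] at hx ⊢
    exact Nat.div_lt_of_lt_mul (mul_comm m t ▸ hx.1)
  · intro j hj
    simp only [mem_filter, mem_range] at hj ⊢
    constructor
    · calc b + j*m < m + j*m := by omega
        _ ≤ m + (t-1)*m := by
            have : j ≤ t - 1 := by omega
            exact Nat.add_le_add_left (Nat.mul_le_mul_right m this) m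
        _ = m * t := by cases t with
          | zero => omega
          | succ n => simp [Nat.succ_sub_one]; ring
    · rw [Nat.add_mul_mod_self_right, Nat.mod_eq_of_lt hb]
  · intro x hx
    simp only [mem_filter, mem_range] at hx
    show b + x / m * m = x
    rw [mul_comm, ← hx.2, Nat.mod_add_div]
  · intro j hj
    show (b + j * m) / m = j
    rw [Nat.add_mul_div_right _ _ hm, Nat.div_eq_of_lt hb, zero_add]
  · intro x hx
    simp only [mem_filter, mem_range] at hx
    show F x = F (b + x / m * m)
    have hx' : b + x / m * m = x := by rw [mul_comm, ← hx.2, Nat.mod_add_div]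
    rw [hx']

lemma combined_sum (m t b : ℕ) (hm : 0 < m) (ht : 0 < t) (hb : b < m) :
    ∑ x ∈ (range (m*t)).filter (fun x => x % m = b), ((1:ℚ)/2 - x/(m*t))
      = 1/2 - (b:ℚ)/m := by
  rw [sum_filter_mod m t b hm hb, ← distrib_sum m t hm ht b]
  apply Finset.sum_congr rfl
  intro j _
  push_cast
  ring

lemma fiber_sum (p k m : ℕ) (hp : p.Prime) (hpm : ¬ p ∣ m) (hm : 0 < m) (hk : 0 < k)
    (b c : ℕ) (hb : b < m) (hc : c < m) (hpc : (p * c) % m = b) :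
    ∑ x ∈ (range (m*p^k)).filter (fun x => x % m = b ∧ ¬ p ∣ x), ((1:ℚ)/2 - x/(m*p^k))
      = (c:ℚ)/m - (b:ℚ)/m := by
  have hppos : 0 < p := hp.pos
  have hpk : 0 < p^k := Nat.pow_pos hppos
  have hpk1 : 0 < p^(k-1) := Nat.pow_pos hppos
  have hcop : Nat.Coprime p m := (Nat.Prime.coprime_iff_not_dvd hp).mpr hpm
  have hbm : b % m = b := Nat.mod_eq_of_lt hb
  have hcm : c % m = c := Nat.mod_eq_of_lt hc
  have hpow : p ^ (k-1) * p = p ^ k := by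
    rw [← pow_succ, Nat.sub_add_cancel hk]
  have key := Finset.sum_filter_add_sum_filter_not
    ((range (m*p^k)).filter (fun x => x % m = b)) (fun x => ¬ p ∣ x)
    (fun x => ((1:ℚ)/2 - x/(m*p^k)))
  have hgoal : ∑ x ∈ ((range (m*p^k)).filter (fun x => x % m = b)).filter (fun x => ¬ p ∣ x),
      ((1:ℚ)/2 - x/(m*p^k))
      = ∑ x ∈ (range (m*p^k)).filter (fun x => x % m = b ∧ ¬ p ∣ x), ((1:ℚ)/2 - x/(m*p^k)) := by
    rw [Finset.filter_filter]
  have hall := combined_sum m (p^k) b hm hpk hb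
  push_cast at hall
  have hdivsum : ∑ x ∈ ((range (m*p^k)).filter (fun x => x % m = b)).filter (fun x => ¬ ¬ p ∣ x),
      ((1:ℚ)/2 - x/(m*p^k)) = 1/2 - (c:ℚ)/m := by
    have hc2 := combined_sum m (p^(k-1)) c hm hpk1 hc
    push_cast at hc2
    rw [← hc2]
    refine Finset.sum_nbij' (i := fun x => x / p) (j := fun y => p * y) ?_ ?_ ?_ ?_ ?_
    · intro x hx
      simp only [mem_filter, mem_range, not_not] at hx ⊢
      obtain ⟨⟨hxr, hxb⟩, hpx⟩ := hx
      constructor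
      · apply Nat.div_lt_of_lt_mul
        calc x < m * p^k := hxr
          _ = p * (m * p^(k-1)) := by
              rw [mul_comm p _, mul_assoc, hpow]
      · have hxp : p * (x / p) = x := Nat.mul_div_cancel' hpx
        have h1 : p * (x / p) ≡ p * c [MOD m] := by
          rw [hxp]
          calc x ≡ b [MOD m] := by unfold Nat.ModEq; rw [hxb, hbm]
            _ ≡ p * c [MOD m] := by unfold Nat.ModEq; rw [hpc, hbm]
        have h2 : x / p ≡ c [MOD m] := Nat.ModEq.cancel_left_of_coprime hcop.symm h1
        unfold Nat.ModEq at h2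
        rw [hcm] at h2
        exact h2
    · intro y hy
      simp only [mem_filter, mem_range, not_not] at hy ⊢
      obtain ⟨hyr, hyc⟩ := hy
      refine ⟨⟨?_, ?_⟩, Dvd.intro y rfl⟩
      · calc p * y < p * (m * p^(k-1)) := by exact (Nat.mul_lt_mul_left hppos).mpr hyr
          _ = m * p^k := by rw [mul_comm p _, mul_assoc, hpow]
      · have h1 : p * y ≡ p * c [MOD m] :=
          Nat.ModEq.mul_left p (by unfold Nat.ModEq; rw [hyc, hcm])
        unfold Nat.ModEq at h1
        rw [hpc] at h1
        exact h1
    · intro x hx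
      simp only [mem_filter, mem_range, not_not] at hx
      exact Nat.mul_div_cancel' hx.2
    · intro y hy
      exact Nat.mul_div_cancel_left y hppos
    · intro x hx
      simp only [mem_filter, mem_range, not_not] at hx
      show ((1:ℚ)/2 - x/(m*p^k)) = (1:ℚ)/2 - (x/p : ℕ)/(m*(p:ℚ)^(k-1))
      have hxp : (x : ℚ) = p * ((x / p : ℕ) : ℚ) := by
        rw [← Nat.cast_mul, Nat.mul_div_cancel' hx.2]
      have hpowq : ((m:ℚ) * p^k) = p * (m * p^(k-1)) := by
        have hq : (p:ℚ)^k = (p:ℚ)^(k-1) * p := by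
          rw [← pow_succ, Nat.sub_add_cancel hk]
        rw [hq]; ring
      rw [hxp, hpowq]
      have hp0 : (p:ℚ) ≠ 0 := Nat.cast_ne_zero.mpr hppos.ne'
      rw [mul_div_mul_left _ _ hp0]
  rw [← hgoal]
  have hfin := key
  rw [hdivsum, hall] at hfin
  linarith


lemma unitsMap_val_eq {n m : ℕ} [NeZero n] [NeZero m] (h : m ∣ n) (a : (ZMod n)ˣ) :
    ((ZMod.unitsMap h a : ZMod m)).val = ((a : ZMod n)).val % m := by
  have h5 : ((ZMod.unitsMap h a : (ZMod m)ˣ) : ZMod m)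
      = ((((a : ZMod n)).val : ℕ) : ZMod m) := by
    simp [ZMod.unitsMap_def, ZMod.natCast_val]
  rw [h5, ZMod.val_natCast]

lemma unitsMap_unitOfCoprime {n m : ℕ} [NeZero m] (h : m ∣ n) (x : ℕ)
    (h1 : Nat.Coprime x n) (h2 : Nat.Coprime x m) :
    ZMod.unitsMap h (ZMod.unitOfCoprime x h1) = ZMod.unitOfCoprime x h2 := by
  ext
  simp [ZMod.unitsMap_def, ZMod.coe_unitOfCoprime]

/-- The normalized Stickelberger element `θ_F = -∑'_{0<a<f} (1/2 - a/f)·σ_a⁻¹` of an abelian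
field `F` with Galois group `G` and conductor `f`, where the Artin symbol `a ↦ σ_a = (F/a)`
is encoded as a homomorphism `σ : (ZMod f)ˣ →* G`. -/
noncomputable def stickelberger (f : ℕ) [NeZero f] {G : Type*} [CommGroup G]
    (σ : (ZMod f)ˣ →* G) : MonoidAlgebra ℚ G :=
  -∑ a : (ZMod f)ˣ,
    MonoidAlgebra.single ((σ a)⁻¹) ((1 : ℚ) / 2 - (((a : ZMod f).val : ℚ)) / (f : ℚ))

/-- `σ` is the Artin map of an abelian field whose conductor is exactly `f`: it is surjective
and does not factor through `(ZMod d)ˣ` for any proper divisor `d` of `f`. -/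
def IsConductor (f : ℕ) [NeZero f] {G : Type*} [CommGroup G] (σ : (ZMod f)ˣ →* G) : Prop :=
  Function.Surjective σ ∧
    ∀ (d : ℕ) (hd : d ∣ f), (∀ a : (ZMod f)ˣ, ZMod.unitsMap hd a = 1 → σ a = 1) → d = f

/-- The Frobenius (Artin symbol) of a rational prime `p` unramified in the abelian field with
Artin map `σ : (ZMod f)ˣ →* G` (and `1` if `p` divides `f`). -/
noncomputable def frob (f : ℕ) [NeZero f] {G : Type*} [CommGroup G] (σ : (ZMod f)ˣ →* G)
    (p : ℕ) : G :=
  if h : Nat.Coprime p f then σ (ZMod.unitOfCoprime p h) else 1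

/-- If some prime `p` ramified in `F/ℚ` splits completely in `K/ℚ` (`K ≠ ℚ`), then
`N_{F/K}(θ_F) = 0`. -/
theorem stickelberger_restriction_eq_zero (fF fK : ℕ) [NeZero fF] [NeZero fK] (hK : 1 < fK)
    {GF GK : Type*} [CommGroup GF] [CommGroup GK]
    (σF : (ZMod fF)ˣ →* GF) (σK : (ZMod fK)ˣ →* GK)
    (hcondF : IsConductor fF σF) (hcondK : IsConductor fK σK)
    (hdvd : fK ∣ fF) (π : GF →* GK) (hπ : Function.Surjective π)
    (hcomp : ∀ a : (ZMod fF)ˣ, π (σF a) = σK (ZMod.unitsMap hdvd a))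
    (p : ℕ) (hp : p.Prime) (hram : p ∣ fF) (hunram : ¬ p ∣ fK)
    (hsplit : frob fK σK p = 1) :
    MonoidAlgebra.mapDomainRingHom ℚ π (stickelberger fF σF) = 0 := by
  classical
  have hf0 : fF ≠ 0 := NeZero.ne fF
  set k := fF.factorization p with hkdef
  have hk1 : 0 < k := hp.factorization_pos_of_dvd hf0 hram
  set m := fF / p ^ k with hmdef
  have hmf : p ^ k * m = fF := Nat.ordProj_mul_ordCompl_eq_self fF p
  have hmf' : m * p ^ k = fF := by rw [mul_comm]; exact hmf
  have hpm : ¬ p ∣ m := Nat.not_dvd_ordCompl hp hf0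
  have hm0 : m ≠ 0 := by
    intro h; rw [h, mul_zero] at hmf; exact hf0 hmf.symm
  have hmpos : 0 < m := Nat.pos_of_ne_zero hm0
  haveI : NeZero m := ⟨hm0⟩
  have hmdvd : m ∣ fF := ⟨p ^ k, hmf'.symm ▸ rfl⟩
  have hcpK : Nat.Coprime p fK := (Nat.Prime.coprime_iff_not_dvd hp).mpr hunram
  have hKm : fK ∣ m := Nat.Coprime.dvd_of_dvd_mul_right
    (Nat.Coprime.pow_right k hcpK.symm) (hmf' ▸ hdvd)
  have hcpm : Nat.Coprime p m := (Nat.Prime.coprime_iff_not_dvd hp).mpr hpm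
  set ψ : (ZMod m)ˣ →* GK := σK.comp (ZMod.unitsMap hKm) with hψdef
  set u : (ZMod fF)ˣ →* (ZMod m)ˣ := ZMod.unitsMap hmdvd with hudef
  have hcomp2 : ∀ a : (ZMod fF)ˣ, σK (ZMod.unitsMap hdvd a) = ψ (u a) := by
    intro a
    have h1 : (ZMod.unitsMap hKm).comp (ZMod.unitsMap hmdvd) = ZMod.unitsMap hdvd :=
      ZMod.unitsMap_comp hKm hmdvd
    rw [hψdef, hudef, MonoidHom.comp_apply, ← MonoidHom.comp_apply (ZMod.unitsMap hKm), h1]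
  set pu : (ZMod m)ˣ := ZMod.unitOfCoprime p hcpm with hpudef
  have hψp : ψ pu = 1 := by
    have h2 : ZMod.unitsMap hKm pu = ZMod.unitOfCoprime p hcpK := by
      ext
      simp [hpudef, ZMod.unitsMap_def, ZMod.coe_unitOfCoprime]
    have h3 : frob fK σK p = σK (ZMod.unitOfCoprime p hcpK) := by
      rw [frob, dif_pos hcpK]
    rw [hψdef, MonoidHom.comp_apply, h2, ← h3, hsplit]
  -- notation for the weights
  set wF : (ZMod fF)ˣ → ℚ := fun a => (1:ℚ)/2 - (((a : ZMod fF).val : ℚ)) / (fF : ℚ) with hwF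
  set W : (ZMod m)ˣ → ℚ := fun b => (1:ℚ)/2 - (((b : ZMod m).val : ℚ)) / (m : ℚ) with hwW
  -- reduce to a sum over (ZMod fF)ˣ
  rw [stickelberger, map_neg, neg_eq_zero, map_sum]
  have hterm : ∀ a : (ZMod fF)ˣ,
      MonoidAlgebra.mapDomainRingHom ℚ π
        (MonoidAlgebra.single ((σF a)⁻¹) (wF a))
        = MonoidAlgebra.single ((ψ (u a))⁻¹) (wF a) := by
    intro a
    have : π ((σF a)⁻¹) = (ψ (u a))⁻¹ := by
      rw [map_inv, hcomp a, hcomp2 a]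
    rw [MonoidAlgebra.mapDomainRingHom_apply, MonoidAlgebra.mapDomain_single, this]
  rw [Finset.sum_congr rfl (fun a _ => hterm a)]
  -- fiberwise over u
  rw [← Finset.sum_fiberwise Finset.univ u
    (fun a => MonoidAlgebra.single ((ψ (u a))⁻¹) (wF a))]
  -- inner fibers
  have hinner : ∀ b : (ZMod m)ˣ,
      ∑ a ∈ Finset.univ.filter (fun a => u a = b),
        MonoidAlgebra.single ((ψ (u a))⁻¹) (wF a)
      = MonoidAlgebra.single ((ψ b)⁻¹) (W b - W (pu⁻¹ * b)) := by
    intro b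
    have step1 : ∑ a ∈ Finset.univ.filter (fun a => u a = b),
        MonoidAlgebra.single ((ψ (u a))⁻¹) (wF a)
        = ∑ a ∈ Finset.univ.filter (fun a => u a = b),
          MonoidAlgebra.single ((ψ b)⁻¹) (wF a) := by
      apply Finset.sum_congr rfl
      intro a ha
      rw [(Finset.mem_filter.mp ha).2]
    rw [step1, show ∑ a ∈ Finset.univ.filter (fun a => u a = b),
          MonoidAlgebra.single ((ψ b)⁻¹) (wF a) = MonoidAlgebra.single ((ψ b)⁻¹)
            (∑ a ∈ Finset.univ.filter (fun a => u a = b), wF a) from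
          (map_sum (MonoidAlgebra.singleAddHom ((ψ b)⁻¹)) _ _).symm]
    congr 1
    -- the numeric fiber sum
    have hbv : ((b : ZMod m)).val < m := ZMod.val_lt _
    set c : ℕ := (((pu⁻¹ * b : (ZMod m)ˣ) : ZMod m)).val with hcdef
    have hcv : c < m := ZMod.val_lt _
    have hpc : (p * c) % m = ((b : ZMod m)).val := by
      have hcast : ((p * c : ℕ) : ZMod m) = (b : ZMod m) := by
        push_cast
        rw [hcdef, ZMod.natCast_val, ZMod.cast_id]
        have hpcast : ((p : ℕ) : ZMod m) = ((pu : (ZMod m)ˣ) : ZMod m) :=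
          (ZMod.coe_unitOfCoprime p hcpm).symm
        rw [hpcast, ← Units.val_mul, mul_inv_cancel_left]
      rw [← ZMod.val_natCast m (p*c), hcast]
    have hfF : ((fF:ℚ)) = (m:ℚ) * (p:ℚ)^k := by
      rw [← hmf']; push_cast; ring
    have hbij : ∑ a ∈ Finset.univ.filter (fun a => u a = b), wF a
        = ∑ x ∈ (Finset.range (m*p^k)).filter
            (fun x => x % m = ((b : ZMod m)).val ∧ ¬ p ∣ x),
            ((1:ℚ)/2 - (x:ℚ)/((m:ℚ)*(p:ℚ)^k)) := by
      refine Finset.sum_bij (i := fun a _ => ((a : ZMod fF)).val) ?_ ?_ ?_ ?_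
      · intro a ha
        simp only [Finset.mem_filter, Finset.mem_univ, true_and] at ha
        simp only [Finset.mem_filter, Finset.mem_range]
        refine ⟨?_, ?_, ?_⟩
        · show ((a : ZMod fF)).val < m * p ^ k
          rw [hmf']
          exact ZMod.val_lt _
        · rw [← unitsMap_val_eq hmdvd a]
          rw [hudef] at ha
          rw [ha]
        · intro hdvdpx
          have hcopa : Nat.Coprime ((a : ZMod fF)).val fF := ZMod.val_coe_unit_coprime a
          have hpg : p ∣ Nat.gcd ((a : ZMod fF)).val fF := Nat.dvd_gcd hdvdpx hram
          rw [hcopa] at hpg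
          exact (Nat.Prime.one_lt hp).not_ge (Nat.le_of_dvd Nat.one_pos hpg)
      · intro a₁ h₁ a₂ h₂ hval
        exact Units.ext (ZMod.val_injective fF hval)
      · intro x hx
        simp only [Finset.mem_filter, Finset.mem_range] at hx
        obtain ⟨hxr, hxb, hxp⟩ := hx
        have hcxp : Nat.Coprime x (p^k) :=
          Nat.Coprime.pow_right _ ((Nat.Prime.coprime_iff_not_dvd hp).mpr hxp).symm
        have hcxm : Nat.Coprime x m := by
          have hrec := Nat.gcd_rec m x
          unfold Nat.Coprime at *
          rw [Nat.gcd_comm, hrec, hxb]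
          exact ZMod.val_coe_unit_coprime b
        have hcx : Nat.Coprime x fF := by
          rw [← hmf']
          exact Nat.Coprime.mul_right hcxm hcxp
        refine ⟨ZMod.unitOfCoprime x hcx,
          Finset.mem_filter.mpr ⟨Finset.mem_univ _, ?_⟩, ?_⟩
        · rw [hudef, unitsMap_unitOfCoprime hmdvd x hcx hcxm]
          ext
          rw [ZMod.coe_unitOfCoprime, ← ZMod.natCast_mod x m, hxb,
            ZMod.natCast_val, ZMod.cast_id]
        · show ((ZMod.unitOfCoprime x hcx : ZMod fF)).val = x
          rw [ZMod.coe_unitOfCoprime, ZMod.val_natCast,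
            Nat.mod_eq_of_lt (hmf' ▸ hxr)]
      · intro a ha
        rw [hwF]
        show (1:ℚ)/2 - (((a : ZMod fF)).val : ℚ)/(fF:ℚ) = _
        rw [hfF]
    rw [hbij, fiber_sum p k m hp hpm hmpos hk1 ((b : ZMod m)).val c hbv hcv hpc]
    rw [hwW]
    show ((c:ℚ))/m - (((b : ZMod m)).val : ℚ)/m
      = ((1:ℚ)/2 - (((b : ZMod m)).val : ℚ)/m) - ((1:ℚ)/2 - ((c:ℚ))/m)
    ring
  simp only [hinner]
  have hsub : ∀ b : (ZMod m)ˣ,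
      MonoidAlgebra.single ((ψ b)⁻¹) (W b - W (pu⁻¹ * b))
      = MonoidAlgebra.single ((ψ b)⁻¹) (W b)
        - MonoidAlgebra.single ((ψ b)⁻¹) (W (pu⁻¹ * b)) :=
    fun b => MonoidAlgebra.single_sub _ _ _
  simp only [hsub]
  rw [Finset.sum_sub_distrib]
  have hre : ∑ b : (ZMod m)ˣ, MonoidAlgebra.single ((ψ b)⁻¹) (W (pu⁻¹ * b))
      = ∑ b : (ZMod m)ˣ, MonoidAlgebra.single ((ψ b)⁻¹) (W b) := by
    refine (Fintype.sum_equiv (Equiv.mulLeft pu)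
      (fun b => MonoidAlgebra.single ((ψ b)⁻¹) (W b))
      (fun b => MonoidAlgebra.single ((ψ b)⁻¹) (W (pu⁻¹ * b))) ?_).symm
    intro x
    show MonoidAlgebra.single ((ψ x)⁻¹) (W x)
      = MonoidAlgebra.single ((ψ (pu * x))⁻¹) (W (pu⁻¹ * (pu * x)))
    rw [map_mul, hψp, one_mul, inv_mul_cancel_left]
  rw [hre, sub_self]
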